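/- Let d = 2, U := {e ∈ ℤ² : |e|₁ = 1}, and define probability vectors p(e) := 1/4 for all e ∈ U, and q(±e₁) := 1/6, q(±e₂) := 1/3. Define space-time environments ξ, ξ' ∈ (𝒫(U)^{ℤ²})^ℕ by ξ_n(x,·) := p if |x|₁ + n is even and q if |x|₁ + n is odd, and ξ'_n(x,·) := p if |x|₁ + n is odd and q if |x|₁ + n is even. Let ℙ := ½δ_ξ + ½δ_{ξ'}. Then: (a) for every e ∈ U, θ_{1,e}ξ = ξ and θ_{1,e}ξ' = ξ', while θ_{1,0}ξ = ξ' and θ_{1,0}ξ' = ξ; (b) consequently the event {ω = ξ} is invariant under every θ_{1,e}, e ∈ U, and has ℙ-measure 1/2, so {θ_{1,e} : e ∈ U} is NOT an ergodic family of transformations for ℙ; (c) the enlarged family {θ_{1,e} : e ∈ ℤ², |e|₁ ≤ 1} IS an ergodic family for ℙ. -/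
import Mathlib


open MeasureTheory

namespace CounterexampleErgodicity

/-- Points of the lattice `ℤ²`. -/
abbrev Z2 := Fin 2 → ℤ

/-- The space of time-dependent environments on `ℤ²`. -/
abbrev EnvSpace2 := ℕ → Z2 → Z2 → ℝ

/-- The space-time shift `θ_{n,x}`. -/
def thetaShift (n : ℕ) (x : Z2) (ω : EnvSpace2) : EnvSpace2 :=
  fun m y e => ω (n + m) (y + x) e

/-- The jump range `U = {e ∈ ℤ² : |e|₁ = 1}`. -/
def U2 : Finset Z2 := {![1, 0], ![-1, 0], ![0, 1], ![0, -1]}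

/-- The probability vector `p`: `p(e) = 1/4` for all `e`, `|e|₁ = 1`. -/
noncomputable def pvec : Z2 → ℝ := fun e => if e ∈ U2 then 1 / 4 else 0

/-- The probability vector `q`: `q(±e₁) = 1/6`, `q(±e₂) = 1/3`. -/
noncomputable def qvec : Z2 → ℝ := fun e =>
  if e = ![1, 0] ∨ e = ![-1, 0] then 1 / 6
  else if e = ![0, 1] ∨ e = ![0, -1] then 1 / 3 else 0

/-- The `ℓ¹`-norm of a point of `ℤ²`. -/
def normOne (x : Z2) : ℕ := (x 0).natAbs + (x 1).natAbs

/-- The environment `ξ`: `p` at space-time points with `|x|₁ + n` even, `q` otherwise. -/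
noncomputable def xi : EnvSpace2 := fun n x =>
  if Even (normOne x + n) then pvec else qvec

/-- The environment `ξ'`: `p` at space-time points with `|x|₁ + n` odd, `q` otherwise. -/
noncomputable def xi' : EnvSpace2 := fun n x =>
  if Even (normOne x + n) then qvec else pvec

/-- The environment law `ℙ = ½ δ_ξ + ½ δ_{ξ'}`. -/
noncomputable def Plaw : Measure EnvSpace2 :=
  (1 / 2 : ENNReal) • Measure.dirac xi + (1 / 2 : ENNReal) • Measure.dirac xi'

instance : MeasurableSingletonClass EnvSpace2 := Pi.instMeasurableSingletonClass

-- helpers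
lemma pvec_ne_qvec : pvec ≠ qvec := by
  intro h
  have := congrFun h ![1, 0]
  simp [pvec, qvec, U2] at this

lemma normOne_U2 {e : Z2} (he : e ∈ U2) : normOne e = 1 := by
  fin_cases he <;> decide

lemma parity_add (x e : Z2) : normOne (x + e) % 2 = (normOne x + normOne e) % 2 := by
  simp only [normOne, Pi.add_apply]; omega

lemma even_shift {e : Z2} (he : normOne e = 1) (x : Z2) (m : ℕ) :
    Even (normOne (x + e) + (1 + m)) ↔ Even (normOne x + m) := by
  have := parity_add x e
  simp only [Nat.even_iff]; omega

lemma shift_xi {e : Z2} (he : normOne e = 1) : thetaShift 1 e xi = xi := by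
  funext m y
  show (if Even (normOne (y + e) + (1 + m)) then pvec else qvec) = _
  rw [xi, if_congr (even_shift he y m) rfl rfl]

lemma shift_xi' {e : Z2} (he : normOne e = 1) : thetaShift 1 e xi' = xi' := by
  funext m y
  show (if Even (normOne (y + e) + (1 + m)) then qvec else pvec) = _
  rw [xi', if_congr (even_shift he y m) rfl rfl]

lemma shift0_xi : thetaShift 1 0 xi = xi' := by
  funext m y
  show (if Even (normOne (y + 0) + (1 + m)) then pvec else qvec) = _
  rw [add_zero, xi']
  by_cases h : Even (normOne y + m)
  · rw [if_pos h, if_neg (by simp only [Nat.even_iff] at h ⊢; omega)]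
  · rw [if_neg h, if_pos (by simp only [Nat.even_iff] at h ⊢; omega)]

lemma shift0_xi' : thetaShift 1 0 xi' = xi := by
  funext m y
  show (if Even (normOne (y + 0) + (1 + m)) then qvec else pvec) = _
  rw [add_zero, xi]
  by_cases h : Even (normOne y + m)
  · rw [if_pos h, if_neg (by simp only [Nat.even_iff] at h ⊢; omega)]
  · rw [if_neg h, if_pos (by simp only [Nat.even_iff] at h ⊢; omega)]

lemma xi_ne_xi' : xi ≠ xi' := by
  intro h
  have := congrFun (congrFun h 0) 0
  simp only [xi, xi'] at this
  have h0 : normOne (0 : Z2) + 0 = 0 := by simp [normOne]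
  rw [h0] at this
  simp at this
  exact pvec_ne_qvec this

lemma Plaw_apply {S : Set EnvSpace2} (hS : MeasurableSet S) :
    Plaw S = (1 / 2 : ENNReal) * S.indicator 1 xi + (1 / 2 : ENNReal) * S.indicator 1 xi' := by
  simp [Plaw, Measure.dirac_apply' _ hS]

/-- The invariant set with measure 1/2 -/
def Aset : Set EnvSpace2 := {ω | ∃ N, ∀ m, N ≤ m → ∀ x, ω m x = xi m x}

lemma xi_mem_Aset : xi ∈ Aset := ⟨0, fun _ _ _ => rfl⟩

lemma xi'_notMem_Aset : xi' ∉ Aset := by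
  rintro ⟨N, hN⟩
  by_cases h : Even N
  · have := hN N le_rfl 0
    have h0 : normOne (0 : Z2) + N = N := by simp [normOne]
    simp only [xi, xi', h0, if_pos h] at this
    exact pvec_ne_qvec this.symm
  · have := hN N le_rfl ![1, 0]
    have h1 : normOne ![1, 0] = 1 := by decide
    have h2 : Even (normOne ![1, 0] + N) := by
      simp only [Nat.even_iff] at h ⊢; omega
    simp only [xi, xi', if_pos h2] at this
    exact pvec_ne_qvec this.symm

lemma Aset_meas : MeasurableSet Aset := by
  have : Aset = ⋃ N : ℕ, ⋂ m : ℕ, ⋂ x : Z2, {ω : EnvSpace2 | N ≤ m → ω m x = xi m x} := by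
    ext ω
    simp only [Aset, Set.mem_setOf_eq, Set.mem_iUnion, Set.mem_iInter]
    tauto
  rw [this]
  refine MeasurableSet.iUnion fun N => MeasurableSet.iInter fun m => MeasurableSet.iInter fun x => ?_
  by_cases h : N ≤ m
  · simp only [h, true_implies]
    have hm : Measurable fun ω : EnvSpace2 => ω m x :=
      (measurable_pi_apply x).comp (measurable_pi_apply m)
    exact hm (MeasurableSet.singleton (xi m x))
  · simp only [h, false_implies]
    exact MeasurableSet.univ

lemma Aset_inv {e : Z2} (he : normOne e = 1) : thetaShift 1 e ⁻¹' Aset = Aset := by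
  have hx := shift_xi he
  ext ω
  simp only [Set.mem_preimage, Aset, Set.mem_setOf_eq]
  constructor
  · rintro ⟨N, hN⟩
    refine ⟨N + 1, fun m hm x => ?_⟩
    have e1 : 1 + (m - 1) = m := by omega
    have e2 : x - e + e = x := sub_add_cancel x e
    calc ω m x = ω (1 + (m - 1)) (x - e + e) := by rw [e1, e2]
      _ = xi (m - 1) (x - e) := hN (m - 1) (by omega) (x - e)
      _ = thetaShift 1 e xi (m - 1) (x - e) := by rw [hx]
      _ = xi (1 + (m - 1)) (x - e + e) := rfl
      _ = xi m x := by rw [e1, e2]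
  · rintro ⟨N, hN⟩
    refine ⟨N, fun m _ x => ?_⟩
    show ω (1 + m) (x + e) = xi m x
    rw [hN (1 + m) (by omega) (x + e)]
    exact congrFun (congrFun hx m) x

/-- (a) every `e ∈ U` fixes `ξ` and `ξ'` under `θ_{1,e}`, while
`θ_{1,0}` interchanges `ξ` and `ξ'`;  (b) `ℙ{ξ} = 1/2`, the event `{ω = ξ}` is
invariant (mod `ℙ`) under every `θ_{1,e}`, `e ∈ U`, and `{θ_{1,e} : e ∈ U}` is *not* an
ergodic family for `ℙ`;  (c) the enlarged family `{θ_{1,e} : |e|₁ ≤ 1}` *is* an ergodic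
family for `ℙ`. -/
theorem counterexample_ergodicity :
    -- (a)
    ((∀ e ∈ U2, thetaShift 1 e xi = xi ∧ thetaShift 1 e xi' = xi') ∧
      thetaShift 1 0 xi = xi' ∧ thetaShift 1 0 xi' = xi) ∧
    -- (b)
    (Plaw {ω | ω = xi} = 1 / 2 ∧
      (∀ e ∈ U2,
        Plaw ((thetaShift 1 e ⁻¹' {xi} \ {xi}) ∪ ({xi} \ thetaShift 1 e ⁻¹' {xi})) = 0) ∧
      ¬(∀ A : Set EnvSpace2, MeasurableSet A →
          (∀ e ∈ U2, thetaShift 1 e ⁻¹' A = A) → Plaw A = 0 ∨ Plaw A = 1)) ∧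
    -- (c)
    (∀ A : Set EnvSpace2, MeasurableSet A →
      (∀ e : Z2, normOne e ≤ 1 → thetaShift 1 e ⁻¹' A = A) →
      Plaw A = 0 ∨ Plaw A = 1) := by
  refine ⟨⟨fun e he => ⟨shift_xi (normOne_U2 he), shift_xi' (normOne_U2 he)⟩,
    shift0_xi, shift0_xi'⟩, ⟨?_, ?_, ?_⟩, ?_⟩
  · -- Plaw {ω | ω = xi} = 1/2
    have h1 : {ω : EnvSpace2 | ω = xi} = {xi} := Set.setOf_eq_eq_singleton
    rw [h1, Plaw_apply (MeasurableSet.singleton xi),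
      Set.indicator_of_mem (Set.mem_singleton xi),
      Set.indicator_of_notMem (fun h => xi_ne_xi' (Set.mem_singleton_iff.mp h).symm)]
    simp
  · -- symmetric difference
    intro e he
    have hfix := shift_xi (normOne_U2 he)
    have hfix' := shift_xi' (normOne_U2 he)
    have hz : Plaw (({xi} ∪ {xi'} : Set EnvSpace2)ᶜ) = 0 := by
      rw [Plaw_apply (((MeasurableSet.singleton xi).union (MeasurableSet.singleton xi')).compl),
        Set.indicator_of_notMem (by simp), Set.indicator_of_notMem (by simp)]
      simp
    refine measure_mono_null ?_ hz
    rintro ω hw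
    simp only [Set.mem_union, Set.mem_diff, Set.mem_preimage, Set.mem_singleton_iff,
      Set.mem_compl_iff] at hw ⊢
    push_neg
    rcases hw with ⟨h1, h2⟩ | ⟨h1, h2⟩
    · refine ⟨h2, fun h => ?_⟩
      subst h
      exact xi_ne_xi' (hfix'.symm.trans h1).symm
    · subst h1
      exact absurd hfix h2
  · -- not ergodic
    intro h
    rcases h Aset Aset_meas (fun e he => Aset_inv (normOne_U2 he)) with h0 | h1
    · rw [Plaw_apply Aset_meas, Set.indicator_of_mem xi_mem_Aset,
        Set.indicator_of_notMem xi'_notMem_Aset] at h0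
      simp at h0
    · rw [Plaw_apply Aset_meas, Set.indicator_of_mem xi_mem_Aset,
        Set.indicator_of_notMem xi'_notMem_Aset] at h1
      simp at h1
  · -- ergodic for enlarged family
    intro A hA hinv
    have h0 : thetaShift 1 0 ⁻¹' A = A := hinv 0 (by simp [normOne])
    have hiff : xi ∈ A ↔ xi' ∈ A := by
      conv_lhs => rw [← h0]
      rw [Set.mem_preimage, shift0_xi]
    by_cases hxi : xi ∈ A
    · right
      rw [Plaw_apply hA, Set.indicator_of_mem hxi, Set.indicator_of_mem (hiff.mp hxi)]
      simp [ENNReal.inv_two_add_inv_two]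
    · left
      rw [Plaw_apply hA, Set.indicator_of_notMem hxi,
        Set.indicator_of_notMem (fun h => hxi (hiff.mpr h))]
      simp

end CounterexampleErgodicity
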